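/- Let X be a locally compact Hausdorff space, μ a positive Radon measure on X, and ν a finite complex Radon measure on X such that for every nonnegative f ∈ C_c(X) one has |∫ f dν| ≤ (∫ f² dμ)^{1/2}. Then ν is absolutely continuous with respect to μ. -/

import Mathlib

open MeasureTheory

/-- The integral of a real function against a complex measure, defined via the Jordan
decompositions of the real and imaginary parts:
`∫ f dν = (∫ f dν_re⁺ - ∫ f dν_re⁻) + i (∫ f dν_im⁺ - ∫ f dν_im⁻)`. -/
noncomputable def complexMeasureIntegral {X : Type*} [MeasurableSpace X]
    (ν : ComplexMeasure X) (f : X → ℝ) : ℂ :=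
  Complex.ofReal ((∫ x, f x ∂(ComplexMeasure.re ν).toJordanDecomposition.posPart) -
      ∫ x, f x ∂(ComplexMeasure.re ν).toJordanDecomposition.negPart) +
    Complex.I * Complex.ofReal
      ((∫ x, f x ∂(ComplexMeasure.im ν).toJordanDecomposition.posPart) -
        ∫ x, f x ∂(ComplexMeasure.im ν).toJordanDecomposition.negPart)

/-- Auxiliary lemma: if `p`, `n` are finite measures dominated by a regular finite measure `τ`,
`μ` is regular, and for every continuous compactly supported `f` with `0 ≤ f ≤ 1` we have
`∫ f dp - ∫ f dn ≤ √(∫ f² dμ)`, then `p` vanishes on every measurable set `B` with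
`μ B = 0` and `n B = 0`. -/
lemma aux_vanish {X : Type*} [TopologicalSpace X] [T2Space X] [LocallyCompactSpace X]
    [MeasurableSpace X] [BorelSpace X]
    (μ τ p n : Measure X) [IsFiniteMeasure p] [IsFiniteMeasure n] [IsFiniteMeasure τ]
    (hμ : μ.Regular) (hτ : τ.Regular)
    (hp : ∀ s, p s ≤ τ s) (hn : ∀ s, n s ≤ τ s)
    (hb : ∀ f : X → ℝ, Continuous f → HasCompactSupport f → (∀ x, 0 ≤ f x) →
      (∀ x, f x ≤ 1) → ∫ x, f x ∂p - ∫ x, f x ∂n ≤ Real.sqrt (∫ x, (f x) ^ 2 ∂μ))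
    (B : Set X) (hB : MeasurableSet B) (hμB : μ B = 0) (hnB : n B = 0) : p B = 0 := by
  have key : ∀ ε : ℝ, 0 < ε → p B ≤ ENNReal.ofReal (3 * ε) := by
    intro ε hε
    have hε' : (ENNReal.ofReal ε) ≠ 0 := by
      simp [ENNReal.ofReal_eq_zero, not_le, hε]
    -- compact K inside B almost filling it for τ
    obtain ⟨K, hKB, hK, hτK⟩ := hB.exists_isCompact_lt_add (measure_ne_top τ B) hε'
    have hKmeas : MeasurableSet K := hK.measurableSet
    have hpBK : p (B \ K) ≤ ENNReal.ofReal ε :=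
      (hp _).trans
        (measure_diff_lt_of_lt_add hKmeas.nullMeasurableSet hKB (measure_ne_top τ K) hτK).le
    -- open V ⊇ K with μ V < ε² and τ V < τ K + ε
    have hμK : μ K = 0 := le_antisymm (hμB ▸ measure_mono hKB) (zero_le)
    obtain ⟨U1, hKU1, hU1open, hμU1⟩ :=
      K.exists_isOpen_lt_of_lt (ENNReal.ofReal (ε ^ 2))
        (by rw [hμK]; exact ENNReal.ofReal_pos.2 (by positivity))
    obtain ⟨U2, hKU2, hU2open, hτU2⟩ := K.exists_isOpen_lt_add (measure_ne_top τ K) hε'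
    set V := U1 ∩ U2 with hV
    have hVopen : IsOpen V := hU1open.inter hU2open
    have hVmeas : MeasurableSet V := hVopen.measurableSet
    have hKV : K ⊆ V := Set.subset_inter hKU1 hKU2
    have hμV : μ V < ENNReal.ofReal (ε ^ 2) :=
      lt_of_le_of_lt (measure_mono Set.inter_subset_left) hμU1
    have hτVK : τ (V \ K) < ENNReal.ofReal ε :=
      measure_diff_lt_of_lt_add hKmeas.nullMeasurableSet hKV (measure_ne_top τ K)
        (lt_of_le_of_lt (measure_mono Set.inter_subset_right) hτU2)
    have hnK : n K = 0 := le_antisymm (hnB ▸ measure_mono hKB) (zero_le)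
    have hnV : n V ≤ ENNReal.ofReal ε := by
      calc n V = n ((V \ K) ∪ K) := by rw [Set.diff_union_of_subset hKV]
        _ ≤ n (V \ K) + n K := measure_union_le _ _
        _ ≤ ENNReal.ofReal ε := by
            rw [hnK, add_zero]; exact (hn _).trans hτVK.le
    -- Urysohn function
    obtain ⟨f, hf1, hf0, hfc, hf01⟩ :=
      exists_continuous_one_zero_of_isCompact hK hVopen.isClosed_compl
        (Set.disjoint_compl_right_iff_subset.2 hKV)
    set F : X → ℝ := fun x => f x with hF
    have hFcont : Continuous F := f.continuous
    have hFc : HasCompactSupport F := hfc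
    have hF0 : ∀ x, 0 ≤ F x := fun x => (hf01 x).1
    have hF1 : ∀ x, F x ≤ 1 := fun x => (hf01 x).2
    have intp : Integrable F p := hFcont.integrable_of_hasCompactSupport hFc
    have intn : Integrable F n := hFcont.integrable_of_hasCompactSupport hFc
    -- lower bound for ∫ F dp
    have h1 : (p K).toReal ≤ ∫ x, F x ∂p := by
      rw [← measureReal_def, ← integral_indicator_one hKmeas]
      refine integral_mono ((integrable_const (1 : ℝ)).indicator hKmeas) intp fun x => ?_
      by_cases hx : x ∈ K
      · simp only [Set.indicator_of_mem hx]
        exact le_of_eq (hf1 hx).symm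
      · simp [Set.indicator_of_notMem hx, hF0 x]
    -- upper bound for ∫ F dn
    have h2 : ∫ x, F x ∂n ≤ (n V).toReal := by
      rw [← measureReal_def, ← integral_indicator_one hVmeas]
      refine integral_mono intn ((integrable_const (1 : ℝ)).indicator hVmeas) fun x => ?_
      by_cases hx : x ∈ V
      · simpa [Set.indicator_of_mem hx] using hF1 x
      · simp only [Set.indicator_of_notMem hx]
        exact le_of_eq (hf0 hx)
    have h2' : (n V).toReal ≤ ε := by
      rw [← ENNReal.toReal_ofReal hε.le]
      exact ENNReal.toReal_mono ENNReal.ofReal_ne_top hnV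
    -- upper bound for ∫ F² dμ
    have hμVfin := hμV.ne_top
    have intsq : Integrable (fun x => F x ^ 2) μ :=
      (hFcont.pow 2).integrable_of_hasCompactSupport
        (by simpa [pow_two] using hFc.mul_right (f' := F))
    have hind : Integrable (V.indicator fun _ => (1 : ℝ)) μ := by
      rw [integrable_indicator_iff hVmeas]
      exact integrableOn_const (lt_of_lt_of_le hμV le_top).ne
    have h3 : ∫ x, F x ^ 2 ∂μ ≤ (μ V).toReal := by
      rw [← measureReal_def, ← integral_indicator_one hVmeas]
      refine integral_mono intsq hind fun x => ?_
      by_cases hx : x ∈ V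
      · simp only [Set.indicator_of_mem hx]
        exact pow_le_one₀ (hF0 x) (hF1 x)
      · have hfx : F x = 0 := hf0 hx
        simp [Set.indicator_of_notMem hx, hfx]
    have h3' : Real.sqrt (∫ x, F x ^ 2 ∂μ) ≤ ε := by
      have : (μ V).toReal ≤ ε ^ 2 := by
        rw [← ENNReal.toReal_ofReal (show (0:ℝ) ≤ ε ^ 2 by positivity)]
        exact ENNReal.toReal_mono ENNReal.ofReal_ne_top hμV.le
      calc Real.sqrt (∫ x, F x ^ 2 ∂μ) ≤ Real.sqrt (ε ^ 2) :=
            Real.sqrt_le_sqrt (h3.trans this)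
        _ = ε := by rw [Real.sqrt_sq hε.le]
    -- combine
    have hPK : (p K).toReal ≤ 2 * ε := by
      have := hb F hFcont hFc hF0 hF1
      have := h1.trans (by linarith [h2.trans h2'] : ∫ x, F x ∂p ≤ 2 * ε)
      linarith
    have hPK' : p K ≤ ENNReal.ofReal (2 * ε) :=
      (ENNReal.le_ofReal_iff_toReal_le (measure_ne_top p K) (by positivity)).2 hPK
    calc p B = p ((B \ K) ∪ K) := by rw [Set.diff_union_of_subset hKB]
      _ ≤ p (B \ K) + p K := measure_union_le _ _
      _ ≤ ENNReal.ofReal ε + ENNReal.ofReal (2 * ε) := add_le_add hpBK hPK'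
      _ = ENNReal.ofReal (3 * ε) := by
          rw [← ENNReal.ofReal_add hε.le (by positivity)]; ring_nf
  by_contra hne
  have hpos : 0 < (p B).toReal := ENNReal.toReal_pos hne (measure_ne_top p B)
  have hle := key ((p B).toReal / 4) (by positivity)
  have : (p B).toReal ≤ 3 * ((p B).toReal / 4) := by
    have := ENNReal.toReal_mono ENNReal.ofReal_ne_top hle
    rwa [ENNReal.toReal_ofReal (by positivity)] at this
  linarith

/-- Let `X` be a locally compact Hausdorff space, `μ` a positive Radon
measure on `X` and `ν` a (finite) complex Radon measure on `X` such that
`|∫ f dν| ≤ (∫ f² dμ)^{1/2}` for every nonnegative `f ∈ C_c(X)`.  Then `ν` is absolutely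
continuous with respect to `μ`: every Borel set `A` with `μ A = 0` satisfies `ν A = 0`. -/
theorem complexMeasure_absolutelyContinuous_of_sq_integral_bound
    {X : Type*} [TopologicalSpace X] [T2Space X] [LocallyCompactSpace X]
    [MeasurableSpace X] [BorelSpace X]
    (μ : Measure X) (hμ : μ.Regular)
    (ν : ComplexMeasure X)
    (hν : ((ComplexMeasure.re ν).totalVariation +
      (ComplexMeasure.im ν).totalVariation).Regular)
    (hbound : ∀ f : X → ℝ, Continuous f → HasCompactSupport f → 0 ≤ f →
      ‖complexMeasureIntegral ν f‖ ≤ Real.sqrt (∫ x, (f x) ^ 2 ∂μ)) :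
    ∀ A : Set X, MeasurableSet A → μ A = 0 → ν A = 0 := by
  intro A hA hμA
  set p₁ := (ComplexMeasure.re ν).toJordanDecomposition.posPart with hp₁
  set n₁ := (ComplexMeasure.re ν).toJordanDecomposition.negPart with hn₁
  set p₂ := (ComplexMeasure.im ν).toJordanDecomposition.posPart with hp₂
  set n₂ := (ComplexMeasure.im ν).toJordanDecomposition.negPart with hn₂
  set τ := (ComplexMeasure.re ν).totalVariation + (ComplexMeasure.im ν).totalVariation with hτ
  have hτeq : ∀ s, τ s = p₁ s + n₁ s + (p₂ s + n₂ s) := by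
    intro s
    rw [hτ, hp₁, hn₁, hp₂, hn₂, Measure.add_apply]
    simp only [SignedMeasure.totalVariation, Measure.add_apply]
  have hle₁ : ∀ s, p₁ s ≤ τ s := fun s => by rw [hτeq]; exact le_add_right (le_add_right le_rfl)
  have hle₂ : ∀ s, n₁ s ≤ τ s := fun s => by rw [hτeq]; exact le_add_right (le_add_left le_rfl)
  have hle₃ : ∀ s, p₂ s ≤ τ s := fun s => by rw [hτeq]; exact le_add_left (le_add_right le_rfl)
  have hle₄ : ∀ s, n₂ s ≤ τ s := fun s => by rw [hτeq]; exact le_add_left (le_add_left le_rfl)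
  -- real and imaginary parts of the complex integral
  have hre : ∀ f : X → ℝ, (complexMeasureIntegral ν f).re =
      ∫ x, f x ∂p₁ - ∫ x, f x ∂n₁ := by
    intro f
    rw [hp₁, hn₁]
    simp only [complexMeasureIntegral, Complex.add_re, Complex.mul_re, Complex.I_re,
      Complex.I_im, Complex.ofReal_re, Complex.ofReal_im]
    ring
  have him : ∀ f : X → ℝ, (complexMeasureIntegral ν f).im =
      ∫ x, f x ∂p₂ - ∫ x, f x ∂n₂ := by
    intro f
    rw [hp₂, hn₂]
    simp only [complexMeasureIntegral, Complex.add_im, Complex.mul_im, Complex.I_re,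
      Complex.I_im, Complex.ofReal_re, Complex.ofReal_im]
    ring
  have hb₁ : ∀ f : X → ℝ, Continuous f → HasCompactSupport f → (∀ x, 0 ≤ f x) →
      (∀ x, f x ≤ 1) → ∫ x, f x ∂p₁ - ∫ x, f x ∂n₁ ≤ Real.sqrt (∫ x, (f x) ^ 2 ∂μ) := by
    intro f hc hcs h0 _
    calc ∫ x, f x ∂p₁ - ∫ x, f x ∂n₁ = (complexMeasureIntegral ν f).re := (hre f).symm
      _ ≤ ‖complexMeasureIntegral ν f‖ := Complex.re_le_norm _
      _ ≤ _ := hbound f hc hcs h0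
  have hb₂ : ∀ f : X → ℝ, Continuous f → HasCompactSupport f → (∀ x, 0 ≤ f x) →
      (∀ x, f x ≤ 1) → ∫ x, f x ∂n₁ - ∫ x, f x ∂p₁ ≤ Real.sqrt (∫ x, (f x) ^ 2 ∂μ) := by
    intro f hc hcs h0 _
    calc ∫ x, f x ∂n₁ - ∫ x, f x ∂p₁ = -(complexMeasureIntegral ν f).re := by
          rw [hre f]; ring
      _ ≤ |(complexMeasureIntegral ν f).re| := neg_le_abs _
      _ ≤ ‖complexMeasureIntegral ν f‖ := Complex.abs_re_le_norm _
      _ ≤ _ := hbound f hc hcs h0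
  have hb₃ : ∀ f : X → ℝ, Continuous f → HasCompactSupport f → (∀ x, 0 ≤ f x) →
      (∀ x, f x ≤ 1) → ∫ x, f x ∂p₂ - ∫ x, f x ∂n₂ ≤ Real.sqrt (∫ x, (f x) ^ 2 ∂μ) := by
    intro f hc hcs h0 _
    calc ∫ x, f x ∂p₂ - ∫ x, f x ∂n₂ = (complexMeasureIntegral ν f).im := (him f).symm
      _ ≤ |(complexMeasureIntegral ν f).im| := le_abs_self _
      _ ≤ ‖complexMeasureIntegral ν f‖ := Complex.abs_im_le_norm _
      _ ≤ _ := hbound f hc hcs h0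
  have hb₄ : ∀ f : X → ℝ, Continuous f → HasCompactSupport f → (∀ x, 0 ≤ f x) →
      (∀ x, f x ≤ 1) → ∫ x, f x ∂n₂ - ∫ x, f x ∂p₂ ≤ Real.sqrt (∫ x, (f x) ^ 2 ∂μ) := by
    intro f hc hcs h0 _
    calc ∫ x, f x ∂n₂ - ∫ x, f x ∂p₂ = -(complexMeasureIntegral ν f).im := by
          rw [him f]; ring
      _ ≤ |(complexMeasureIntegral ν f).im| := neg_le_abs _
      _ ≤ ‖complexMeasureIntegral ν f‖ := Complex.abs_im_le_norm _
      _ ≤ _ := hbound f hc hcs h0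
  -- a general step: kill one Jordan part
  haveI h1fin : IsFiniteMeasure ((ComplexMeasure.re ν).totalVariation) :=
    inferInstanceAs (IsFiniteMeasure ((ComplexMeasure.re ν).toJordanDecomposition.posPart +
      (ComplexMeasure.re ν).toJordanDecomposition.negPart))
  haveI h2fin : IsFiniteMeasure ((ComplexMeasure.im ν).totalVariation) :=
    inferInstanceAs (IsFiniteMeasure ((ComplexMeasure.im ν).toJordanDecomposition.posPart +
      (ComplexMeasure.im ν).toJordanDecomposition.negPart))
  haveI hτfin : IsFiniteMeasure τ := by
    rw [hτ]; infer_instance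
  have main : ∀ (p n : Measure X), IsFiniteMeasure p → IsFiniteMeasure n →
      (∀ s, p s ≤ τ s) → (∀ s, n s ≤ τ s) →
      (∀ f : X → ℝ, Continuous f → HasCompactSupport f → (∀ x, 0 ≤ f x) →
        (∀ x, f x ≤ 1) → ∫ x, f x ∂p - ∫ x, f x ∂n ≤ Real.sqrt (∫ x, (f x) ^ 2 ∂μ)) →
      p ⟂ₘ n → p A = 0 := by
    intro p n hfp hfn hlp hln hb hsing
    obtain ⟨s, hsm, hps, hnsc⟩ := hsing
    have h1 : p (A ∩ s) = 0 :=
      le_antisymm (hps ▸ measure_mono Set.inter_subset_right) (zero_le)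
    have h2 : p (A ∩ sᶜ) = 0 := by
      refine aux_vanish μ τ p n hμ hν hlp hln hb (A ∩ sᶜ) (hA.inter hsm.compl) ?_ ?_
      · exact le_antisymm (hμA ▸ measure_mono Set.inter_subset_left) (zero_le)
      · exact le_antisymm (hnsc ▸ measure_mono Set.inter_subset_right) (zero_le)
    have : p A ≤ p (A ∩ s) + p (A ∩ sᶜ) := by
      have h := measure_union_le (μ := p) (A ∩ s) (A ∩ sᶜ)
      rwa [Set.inter_union_compl] at h
    rw [h1, h2, add_zero] at this
    exact le_antisymm this (zero_le)
  have hp₁A : p₁ A = 0 :=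
    main p₁ n₁ inferInstance inferInstance hle₁ hle₂ hb₁
      (ComplexMeasure.re ν).toJordanDecomposition.mutuallySingular
  have hn₁A : n₁ A = 0 :=
    main n₁ p₁ inferInstance inferInstance hle₂ hle₁ hb₂
      (ComplexMeasure.re ν).toJordanDecomposition.mutuallySingular.symm
  have hp₂A : p₂ A = 0 :=
    main p₂ n₂ inferInstance inferInstance hle₃ hle₄ hb₃
      (ComplexMeasure.im ν).toJordanDecomposition.mutuallySingular
  have hn₂A : n₂ A = 0 :=
    main n₂ p₂ inferInstance inferInstance hle₄ hle₃ hb₄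
      (ComplexMeasure.im ν).toJordanDecomposition.mutuallySingular.symm
  have hreA : (ComplexMeasure.re ν) A = 0 :=
    SignedMeasure.null_of_totalVariation_zero _
      (by rw [SignedMeasure.totalVariation, Measure.add_apply, ← hp₁, ← hn₁, hp₁A, hn₁A, add_zero])
  have himA : (ComplexMeasure.im ν) A = 0 :=
    SignedMeasure.null_of_totalVariation_zero _
      (by rw [SignedMeasure.totalVariation, Measure.add_apply, ← hp₂, ← hn₂, hp₂A, hn₂A, add_zero])
  have : ν A = ⟨(ComplexMeasure.re ν) A, (ComplexMeasure.im ν) A⟩ := rfl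
  rw [this, hreA, himA]
  rfl
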